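/- Let (a_n)_{n≥0} be a sequence of integers with a_n ≥ 2 for all n, q₀ = 1, q_{n+1} = a_n·q_n, and let f be a real-valued Q-additive function. Then for every real t, every integer h ≥ 1 and every integer N ≥ q_h, with L = L(N) the length of the Cantor expansion of N, one has |φ_N(t) − φ_{q_{L+1}}(t)| ≤ 2/(a_{L−h+1}·a_{L−h+2}·⋯·a_{L−1}) + 2√2 · ∑_{j=L−h+1}^{L} max_{1≤d≤a_j−1} (1 − cos(t·f(d q_j)))^{1/2}, where φ_M(t) = (1/M) ∑_{n<M} e^{i t f(n)}. -/

import Mathlib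

open Filter Finset Topology

/-- `f : ℕ → ℝ` is `Q`-additive with respect to the Cantor numeration system. -/
def IsCantorAdditive (a : ℕ → ℕ) (Q : ℕ → ℕ) (f : ℕ → ℝ) : Prop :=
  ∀ n : ℕ, f n = ∑ j ∈ Finset.range n, f (n / Q j % a j * Q j)

/-- Empirical characteristic function `φ_M(t) = (1/M) ∑_{n<M} e^{i t f(n)}`. -/
noncomputable def empCharFun (f : ℕ → ℝ) (M : ℕ) (t : ℝ) : ℂ :=
  (∑ n ∈ Finset.range M, Complex.exp (Complex.I * t * f n)) / M

set_option linter.unusedSectionVars false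

section Aux
variable {a : ℕ → ℕ} (ha : ∀ n, 2 ≤ a n) {Q : ℕ → ℕ} (hQ0 : Q 0 = 1)
  (hQ : ∀ n, Q (n + 1) = a n * Q n)

include ha hQ0 hQ

lemma Qpos : ∀ n, 0 < Q n := by
  intro n
  induction n with
  | zero => simp [hQ0]
  | succ k ih => rw [hQ]; exact Nat.mul_pos (by linarith [ha k]) ih

lemma Qprod : ∀ {j k : ℕ}, j ≤ k → Q k = Q j * ∏ i ∈ Ico j k, a i := by
  intro j k hjk
  induction k with
  | zero => interval_cases j; simp
  | succ k ih =>
    rcases Nat.lt_or_ge j (k+1) with hlt | hge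
    · have hjk' : j ≤ k := by omega
      rw [hQ, ih hjk', Finset.prod_Ico_succ_top hjk']
      ring
    · have : j = k + 1 := by omega
      subst this; simp

lemma Qmono : ∀ {j k : ℕ}, j ≤ k → Q j ≤ Q k := by
  intro j k hjk
  rw [Qprod ha hQ0 hQ hjk]
  have : 0 < ∏ i ∈ Ico j k, a i := Finset.prod_pos fun i _ => by linarith [ha i]
  nlinarith [Qpos ha hQ0 hQ j]

lemma Qlt_self : ∀ n, n < Q n := by
  intro n
  induction n with
  | zero => simp [hQ0]
  | succ k ih =>
    rw [hQ]
    have h2 : 2 ≤ a k := ha k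
    nlinarith

variable {f : ℕ → ℝ} (hf : IsCantorAdditive a Q f)
include hf

lemma f_zero : f 0 = 0 := by simpa using hf 0

/-- term vanishes when `n < Q j` -/
lemma term_vanish {n j : ℕ} (hnj : n < Q j) : f (n / Q j % a j * Q j) = 0 := by
  rw [Nat.div_eq_of_lt hnj]
  simpa using f_zero ha hQ0 hQ hf

lemma fsum {n M : ℕ} (hnM : n < Q M) :
    f n = ∑ j ∈ Finset.range M, f (n / Q j % a j * Q j) := by
  rcases le_total n M with hle | hle
  · rw [hf n]
    apply Finset.sum_subset (Finset.range_subset_range.mpr hle)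
    intro j hjM hjn
    simp only [Finset.mem_range, not_lt] at hjM hjn
    exact term_vanish ha hQ0 hQ hf (lt_of_lt_of_le (lt_of_le_of_lt hjn (Qlt_self ha hQ0 hQ j)) le_rfl)
  · rw [hf n]
    symm
    apply Finset.sum_subset (Finset.range_subset_range.mpr hle)
    intro j hjn hjM
    simp only [Finset.mem_range, not_lt] at hjn hjM
    exact term_vanish ha hQ0 hQ hf (lt_of_lt_of_le hnM (Qmono ha hQ0 hQ hjM))

end Aux

section Aux2
variable {a : ℕ → ℕ} (ha : ∀ n, 2 ≤ a n) {Q : ℕ → ℕ} (hQ0 : Q 0 = 1)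
  (hQ : ∀ n, Q (n + 1) = a n * Q n)
include ha hQ0 hQ

lemma digit_low {j k : ℕ} (hjk : j < k) (m : ℕ) : m * Q k / Q j % a j = 0 := by
  have hP := Qprod ha hQ0 hQ (le_of_lt hjk)
  have hpos := Qpos ha hQ0 hQ j
  have hdvd : a j ∣ ∏ i ∈ Ico j k, a i :=
    Finset.dvd_prod_of_mem a (by simp [Finset.mem_Ico]; omega)
  obtain ⟨c, hc⟩ := hdvd
  rw [hP, show m * (Q j * ∏ i ∈ Ico j k, a i) = m * (∏ i ∈ Ico j k, a i) * Q j by ring,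
    Nat.mul_div_cancel _ hpos, hc, show m * (a j * c) = a j * (m * c) by ring,
    Nat.mul_mod_right]

lemma digit_low_add {j k m r : ℕ} (hjk : j < k) :
    (m * Q k + r) / Q j % a j = r / Q j % a j := by
  have hP := Qprod ha hQ0 hQ (le_of_lt hjk)
  have hpos := Qpos ha hQ0 hQ j
  have hdvd : a j ∣ ∏ i ∈ Ico j k, a i :=
    Finset.dvd_prod_of_mem a (by simp [Finset.mem_Ico]; omega)
  obtain ⟨c, hc⟩ := hdvd
  rw [hP, show m * (Q j * ∏ i ∈ Ico j k, a i) + r = r + m * (∏ i ∈ Ico j k, a i) * Q j by ring,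
    Nat.add_mul_div_right _ _ hpos, hc,
    show r / Q j + m * (a j * c) = r / Q j + m * c * a j by ring,
    Nat.add_mul_mod_self_right]

lemma div_high {j k m r : ℕ} (hjk : k ≤ j) (hr : r < Q k) :
    (m * Q k + r) / Q j = m * Q k / Q j := by
  have hP := Qprod ha hQ0 hQ hjk
  have hpos := Qpos ha hQ0 hQ k
  rw [hP, ← Nat.div_div_eq_div_mul, ← Nat.div_div_eq_div_mul,
    show m * Q k + r = Q k * m + r by ring, Nat.mul_add_div hpos,
    Nat.div_eq_of_lt hr, Nat.add_zero, Nat.mul_div_cancel _ hpos]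

end Aux2

section Aux3
variable {a : ℕ → ℕ} (ha : ∀ n, 2 ≤ a n) {Q : ℕ → ℕ} (hQ0 : Q 0 = 1)
  (hQ : ∀ n, Q (n + 1) = a n * Q n) {f : ℕ → ℝ} (hf : IsCantorAdditive a Q f)
include ha hQ0 hQ hf

lemma fsplit {k m r : ℕ} (hr : r < Q k) :
    f (m * Q k + r) = f (m * Q k) + f r := by
  set n := m * Q k + r with hn
  have hM : n < Q (n + k) := lt_of_le_of_lt (Nat.le_add_right _ _) (Qlt_self ha hQ0 hQ (n + k))
  have hM2 : m * Q k < Q (n + k) :=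
    lt_of_le_of_lt (le_trans (Nat.le_add_right _ _) (Nat.le_add_right _ _)) (Qlt_self ha hQ0 hQ (n + k))
  have h1 := fsum ha hQ0 hQ hf hM
  have h2 := fsum ha hQ0 hQ hf hM2
  have h3 := fsum ha hQ0 hQ hf hr
  have hkM : k ≤ n + k := Nat.le_add_left k n
  rw [Finset.range_eq_Ico, ← Finset.sum_Ico_consecutive _ (Nat.zero_le k) hkM] at h1 h2
  have e1 : ∑ j ∈ Ico 0 k, f (n / Q j % a j * Q j) = ∑ j ∈ Ico 0 k, f (r / Q j % a j * Q j) := by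
    refine Finset.sum_congr rfl fun j hj => ?_
    have hjk : j < k := (Finset.mem_Ico.mp hj).2
    rw [hn, digit_low_add ha hQ0 hQ hjk]
  have e2 : ∑ j ∈ Ico k (n + k), f (n / Q j % a j * Q j)
      = ∑ j ∈ Ico k (n + k), f (m * Q k / Q j % a j * Q j) := by
    refine Finset.sum_congr rfl fun j hj => ?_
    have hjk : k ≤ j := (Finset.mem_Ico.mp hj).1
    rw [hn, div_high ha hQ0 hQ hjk hr]
  have e3 : ∑ j ∈ Ico 0 k, f (m * Q k / Q j % a j * Q j) = 0 := by
    refine Finset.sum_eq_zero fun j hj => ?_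
    have hjk : j < k := (Finset.mem_Ico.mp hj).2
    rw [digit_low ha hQ0 hQ hjk, Nat.zero_mul, f_zero ha hQ0 hQ hf]
  rw [h1, h2, h3, e1, e2, e3, Finset.range_eq_Ico]
  ring

lemma f_high {k M m : ℕ} (hkM : k ≤ M) (hm : m * Q k < Q M) :
    f (m * Q k) = ∑ j ∈ Ico k M, f (m * Q k / Q j % a j * Q j) := by
  have h1 := fsum ha hQ0 hQ hf hm
  rw [Finset.range_eq_Ico, ← Finset.sum_Ico_consecutive _ (Nat.zero_le k) hkM] at h1
  have e3 : ∑ j ∈ Ico 0 k, f (m * Q k / Q j % a j * Q j) = 0 := by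
    refine Finset.sum_eq_zero fun j hj => ?_
    have hjk : j < k := (Finset.mem_Ico.mp hj).2
    rw [digit_low ha hQ0 hQ hjk, Nat.zero_mul, f_zero ha hQ0 hQ hf]
  rw [h1, e3, zero_add]

end Aux3

lemma abs_exp_I_mul (θ : ℝ) : ‖Complex.exp (Complex.I * θ)‖ = 1 := by
  rw [Complex.norm_exp]
  simp [Complex.mul_re]

lemma abs_exp_sub_one (θ : ℝ) :
    ‖Complex.exp (Complex.I * θ) - 1‖
      = Real.sqrt 2 * Real.sqrt (1 - Real.cos θ) := by
  have h : Complex.exp (Complex.I * θ) - 1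
      = Complex.ofReal (Real.cos θ - 1) + Complex.ofReal (Real.sin θ) * Complex.I := by
    rw [mul_comm, Complex.exp_mul_I]
    push_cast
    ring
  rw [h, Complex.norm_add_mul_I]
  have h2 : (Real.cos θ - 1) ^ 2 + Real.sin θ ^ 2 = 2 * (1 - Real.cos θ) := by
    have := Real.sin_sq_add_cos_sq θ
    nlinarith
  rw [h2, Real.sqrt_mul (by norm_num : (0:ℝ) ≤ 2)]

lemma abs_prod_sub_one {ι : Type*} (s : Finset ι) (g : ι → ℂ)
    (hg : ∀ i ∈ s, ‖g i‖ = 1) :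
    ‖∏ i ∈ s, g i - 1‖ ≤ ∑ i ∈ s, ‖g i - 1‖ := by
  induction s using Finset.cons_induction with
  | empty => simp
  | cons i s hi ih =>
    rw [Finset.prod_cons, Finset.sum_cons]
    have h1 : ‖g i‖ = 1 := hg i (Finset.mem_cons_self i s)
    calc ‖g i * ∏ x ∈ s, g x - 1‖
        = ‖g i * (∏ x ∈ s, g x - 1) + (g i - 1)‖ := by ring_nf
      _ ≤ ‖g i * (∏ x ∈ s, g x - 1)‖ + ‖g i - 1‖ :=
          norm_add_le _ _
      _ = ‖∏ x ∈ s, g x - 1‖ + ‖g i - 1‖ := by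
          rw [norm_mul, h1, one_mul]
      _ ≤ (∑ x ∈ s, ‖g x - 1‖) + ‖g i - 1‖ := by
          have := ih (fun x hx => hg x (Finset.mem_cons_of_mem hx))
          linarith
      _ = ‖g i - 1‖ + ∑ x ∈ s, ‖g x - 1‖ := by ring

lemma sum_range_mul_eq (g : ℕ → ℂ) (c q : ℕ) :
    ∑ n ∈ Finset.range (c * q), g n
      = ∑ m ∈ Finset.range c, ∑ r ∈ Finset.range q, g (m * q + r) := by
  induction c with
  | zero => simp
  | succ c ih =>
    have hle : c * q ≤ (c + 1) * q := by nlinarith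
    have hsplit : ∑ n ∈ Finset.range ((c + 1) * q), g n
        = ∑ n ∈ Finset.range (c * q), g n + ∑ n ∈ Finset.Ico (c * q) ((c + 1) * q), g n := by
      simp only [Finset.range_eq_Ico]
      rw [
        Finset.sum_Ico_consecutive _ (Nat.zero_le _) hle]
    rw [hsplit, Finset.sum_range_succ, ← ih]
    congr 1
    rw [Finset.sum_Ico_eq_sum_range, show (c + 1) * q - c * q = q by rw [Nat.add_mul, Nat.one_mul]; omega]

set_option maxHeartbeats 1000000 in
/-- **Difference lemma for Cantor numeration systems.** For all `h ≥ 1` and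
`N ≥ q_h`, with `L = L(N)` the length of the Cantor expansion of `N`
(`q_L ≤ N < q_{L+1}`):
`|φ_N(t) − φ_{q_{L+1}}(t)| ≤ 2/(a_{L−h+1}⋯a_{L−1}) + 2√2 ∑_{j=L−h+1}^{L} max_{1≤d≤a_j−1} √(1 − cos(t f(d q_j)))`. -/
theorem cantor_difference_lemma (a : ℕ → ℕ) (ha : ∀ n, 2 ≤ a n)
    (Q : ℕ → ℕ) (hQ0 : Q 0 = 1) (hQ : ∀ n, Q (n + 1) = a n * Q n)
    (f : ℕ → ℝ) (hf : IsCantorAdditive a Q f)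
    (t : ℝ) (h : ℕ) (hh : 1 ≤ h) (N : ℕ) (hN : Q h ≤ N)
    (L : ℕ) (hL1 : Q L ≤ N) (hL2 : N < Q (L + 1)) :
    ‖empCharFun f N t - empCharFun f (Q (L + 1)) t‖ ≤
      2 / (∏ j ∈ Finset.Ico (L - h + 1) L, (a j : ℝ)) +
        2 * Real.sqrt 2 * ∑ j ∈ Finset.Icc (L - h + 1) L,
          (Finset.Ico 1 (a j)).sup'
            (Finset.nonempty_Ico.mpr (by have := ha j; omega))
            (fun d => Real.sqrt (1 - Real.cos (t * f (d * Q j)))) := by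
  classical
  have hhL : h ≤ L := by
    by_contra hc
    push_neg at hc
    have := Qmono ha hQ0 hQ (show L + 1 ≤ h by omega)
    omega
  set K := L - h + 1 with hKdef
  have hKL : K ≤ L := by omega
  have hqKpos : 0 < Q K := Qpos ha hQ0 hQ K
  have hNpos : 0 < N := lt_of_lt_of_le (Qpos ha hQ0 hQ L) hL1
  set P := ∏ i ∈ Finset.Ico K (L + 1), a i with hPdef
  have hQL1 : Q (L + 1) = Q K * P := Qprod ha hQ0 hQ (by omega)
  set PL := ∏ i ∈ Finset.Ico K L, a i with hPLdef
  have hQL : Q L = Q K * PL := Qprod ha hQ0 hQ hKL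
  have hPpos : 0 < P := Finset.prod_pos fun i _ => by linarith [ha i]
  have hPLpos : 0 < PL := Finset.prod_pos fun i _ => by linarith [ha i]
  set e : ℕ → ℂ := fun n => Complex.exp (Complex.I * t * f n) with he
  have habs : ∀ n, ‖e n‖ = 1 := by
    intro n
    rw [he]
    simp only
    rw [show Complex.I * (t : ℂ) * ((f n : ℝ) : ℂ) = Complex.I * ((t * f n : ℝ) : ℂ) by
      push_cast; ring]
    exact abs_exp_I_mul _
  set B : ℕ → ℝ := fun j => (Finset.Ico 1 (a j)).sup'
      (Finset.nonempty_Ico.mpr (by have := ha j; omega))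
      (fun d => Real.sqrt (1 - Real.cos (t * f (d * Q j)))) with hB
  have hBnonneg : ∀ j, 0 ≤ B j := by
    intro j
    rw [hB]
    have hmem : 1 ∈ Finset.Ico 1 (a j) := by
      have := ha j
      simp only [Finset.mem_Ico]
      omega
    beta_reduce
    exact le_trans (Real.sqrt_nonneg _)
      (Finset.le_sup' (fun d => Real.sqrt (1 - Real.cos (t * f (d * Q j)))) hmem)
  set SB : ℝ := ∑ j ∈ Finset.Icc K L, B j with hSB
  have hSBnonneg : 0 ≤ SB := Finset.sum_nonneg fun j _ => hBnonneg j
  -- key bound for block terms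
  have key : ∀ m : ℕ, m * Q K < Q (L + 1) →
      ‖e (m * Q K) - 1‖ ≤ Real.sqrt 2 * SB := by
    intro m hm
    have hexp : e (m * Q K) = ∏ j ∈ Finset.Ico K (L + 1),
        Complex.exp (Complex.I * ((t * f (m * Q K / Q j % a j * Q j) : ℝ) : ℂ)) := by
      rw [he]
      simp only
      rw [f_high ha hQ0 hQ hf (by omega) hm, ← Complex.exp_sum]
      congr 1
      push_cast [Finset.mul_sum]
      exact Finset.sum_congr rfl fun j _ => by ring
    rw [hexp]
    calc ‖∏ j ∈ Finset.Ico K (L + 1),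
            Complex.exp (Complex.I * ((t * f (m * Q K / Q j % a j * Q j) : ℝ) : ℂ)) - 1‖
        ≤ ∑ j ∈ Finset.Ico K (L + 1),
            ‖Complex.exp (Complex.I * ((t * f (m * Q K / Q j % a j * Q j) : ℝ) : ℂ)) - 1‖ :=
          abs_prod_sub_one _ _ (fun j _ => abs_exp_I_mul _)
      _ ≤ ∑ j ∈ Finset.Ico K (L + 1), Real.sqrt 2 * B j := by
          refine Finset.sum_le_sum fun j _ => ?_
          rw [abs_exp_sub_one]
          by_cases hd : m * Q K / Q j % a j = 0
          · rw [hd, Nat.zero_mul, f_zero ha hQ0 hQ hf, mul_zero, Real.cos_zero, sub_self,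
              Real.sqrt_zero, mul_zero]
            exact mul_nonneg (Real.sqrt_nonneg _) (hBnonneg j)
          · have hdlt : m * Q K / Q j % a j < a j := Nat.mod_lt _ (by linarith [ha j])
            have hmem : m * Q K / Q j % a j ∈ Finset.Ico 1 (a j) := by
              simp only [Finset.mem_Ico]
              omega
            rw [hB]
            beta_reduce
            exact mul_le_mul_of_nonneg_left
              (Finset.le_sup' (fun d => Real.sqrt (1 - Real.cos (t * f (d * Q j)))) hmem)
              (Real.sqrt_nonneg 2)
      _ = Real.sqrt 2 * SB := by
          rw [hSB, ← Finset.Ico_add_one_right_eq_Icc, Finset.mul_sum]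
  -- block factorization
  have hblock : ∀ c : ℕ, ∑ n ∈ Finset.range (c * Q K), e n
      = (∑ m ∈ Finset.range c, e (m * Q K)) * (∑ r ∈ Finset.range (Q K), e r) := by
    intro c
    rw [sum_range_mul_eq, Finset.sum_mul]
    refine Finset.sum_congr rfl fun m _ => ?_
    rw [Finset.mul_sum]
    refine Finset.sum_congr rfl fun r hr => ?_
    rw [he]
    simp only
    rw [← Complex.exp_add]
    congr 1
    rw [fsplit ha hQ0 hQ hf (Finset.mem_range.mp hr)]
    push_cast
    ring
  set A : ℂ := ∑ r ∈ Finset.range (Q K), e r with hA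
  have hAabs : ‖A‖ ≤ Q K := by
    calc ‖A‖ ≤ ∑ r ∈ Finset.range (Q K), ‖e r‖ :=
          norm_sum_le _ _
      _ = Q K := by simp [habs]
  set M₁ := N / Q K with hM₁
  set R := N % Q K with hR
  have hNdecomp : M₁ * Q K + R = N := by
    rw [hM₁, hR, Nat.mul_comm]
    exact Nat.div_add_mod N (Q K)
  have hRlt : R < Q K := Nat.mod_lt _ hqKpos
  have hM1le : M₁ * Q K ≤ N := by omega
  set G : ℂ := ∑ m ∈ Finset.range M₁, e (m * Q K) with hG
  set H : ℂ := ∑ m ∈ Finset.range P, e (m * Q K) with hH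
  set Tail : ℂ := ∑ n ∈ Finset.Ico (M₁ * Q K) N, e n with hTail
  have hSN : ∑ n ∈ Finset.range N, e n = G * A + Tail := by
    rw [hG, hA, ← hblock M₁, hTail]
    simp only [Finset.range_eq_Ico]
    rw [Finset.sum_Ico_consecutive _ (Nat.zero_le _) hM1le]
  have hSQ : ∑ n ∈ Finset.range (Q (L + 1)), e n = H * A := by
    rw [hH, hA, ← hblock P]
    congr 1
    rw [hQL1]
    ring
  -- cast facts
  have hN0 : (N : ℂ) ≠ 0 := Nat.cast_ne_zero.mpr (by omega)
  have hq0 : ((Q K : ℕ) : ℂ) ≠ 0 := Nat.cast_ne_zero.mpr (by omega)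
  have hQL10 : ((Q (L + 1) : ℕ) : ℂ) ≠ 0 :=
    Nat.cast_ne_zero.mpr (by have := Qpos ha hQ0 hQ (L + 1); omega)
  have hphiN : empCharFun f N t = (G * A + Tail) / (N : ℂ) := by
    rw [← hSN]
    unfold empCharFun
    simp only [he]
  have hphiQ : empCharFun f (Q (L + 1)) t = H * A / ((Q (L + 1) : ℕ) : ℂ) := by
    rw [← hSQ]
    unfold empCharFun
    simp only [he]
  have hcastQ : ((Q (L + 1) : ℕ) : ℂ) = ((Q K : ℕ) : ℂ) * ((P : ℕ) : ℂ) := by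
    rw [hQL1]; push_cast; ring
  have hcastN : (N : ℂ) = ((M₁ : ℕ) : ℂ) * ((Q K : ℕ) : ℂ) + ((R : ℕ) : ℂ) := by
    rw [← hNdecomp]; push_cast; ring
  have step1 : (G * A + Tail) / (N : ℂ)
      = (G - (M₁ : ℂ)) * A / (N : ℂ) + (M₁ : ℂ) * A / (N : ℂ) + Tail / (N : ℂ) := by
    rw [← add_div, ← add_div]
    congr 1
    ring
  have step2 : (M₁ : ℂ) * A / (N : ℂ)
      = (-(R : ℂ)) * A / ((N : ℂ) * ((Q K : ℕ) : ℂ)) + A / ((Q K : ℕ) : ℂ) := by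
    rw [div_add_div _ _ (mul_ne_zero hN0 hq0) hq0,
      div_eq_div_iff hN0 (mul_ne_zero (mul_ne_zero hN0 hq0) hq0), hcastN]
    ring
  have step3 : A / ((Q K : ℕ) : ℂ)
      = ((P : ℂ) - H) * A / ((Q (L + 1) : ℕ) : ℂ) + H * A / ((Q (L + 1) : ℕ) : ℂ) := by
    rw [← add_div, div_eq_div_iff hq0 hQL10, hcastQ]
    ring
  have hident : (G * A + Tail) / (N : ℂ) - H * A / ((Q (L + 1) : ℕ) : ℂ)
      = (G - (M₁ : ℂ)) * A / (N : ℂ)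
        + (-(R : ℂ)) * A / ((N : ℂ) * ((Q K : ℕ) : ℂ))
        + ((P : ℂ) - H) * A / (((Q (L + 1) : ℕ)) : ℂ)
        + Tail / (N : ℂ) := by
    rw [step1, step2, step3]
    ring
  -- real bounds
  have habsA : (0 : ℝ) ≤ ‖A‖ := norm_nonneg A
  have hqKR : (0 : ℝ) < (Q K : ℝ) := by exact_mod_cast hqKpos
  have hNR : (0 : ℝ) < (N : ℝ) := by exact_mod_cast hNpos
  have hQL1R : (0 : ℝ) < ((Q (L + 1) : ℕ) : ℝ) := by
    exact_mod_cast Qpos ha hQ0 hQ (L + 1)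
  have hT1 : ‖(G - (M₁ : ℂ)) * A / (N : ℂ)‖ ≤ Real.sqrt 2 * SB := by
    have hGbound : ‖G - (M₁ : ℂ)‖ ≤ (M₁ : ℝ) * (Real.sqrt 2 * SB) := by
      have hGsub : G - (M₁ : ℂ) = ∑ m ∈ Finset.range M₁, (e (m * Q K) - 1) := by
        rw [Finset.sum_sub_distrib, Finset.sum_const, Finset.card_range, hG]
        simp
      rw [hGsub]
      calc ‖∑ m ∈ Finset.range M₁, (e (m * Q K) - 1)‖
          ≤ ∑ m ∈ Finset.range M₁, ‖e (m * Q K) - 1‖ := norm_sum_le _ _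
        _ ≤ ∑ m ∈ Finset.range M₁, Real.sqrt 2 * SB := by
            refine Finset.sum_le_sum fun m hm => ?_
            refine key m ?_
            have : m < M₁ := Finset.mem_range.mp hm
            calc m * Q K < M₁ * Q K := by
                  exact mul_lt_mul_of_pos_right this hqKpos
              _ ≤ N := hM1le
              _ < Q (L + 1) := hL2
        _ = (M₁ : ℝ) * (Real.sqrt 2 * SB) := by
            rw [Finset.sum_const, Finset.card_range, nsmul_eq_mul]
    rw [norm_div, norm_mul]
    have h1 : ‖G - (M₁ : ℂ)‖ * ‖A‖ ≤ ((M₁ : ℝ) * (Real.sqrt 2 * SB)) * (Q K : ℝ) :=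
      mul_le_mul hGbound hAabs habsA (by positivity)
    have h2 : ‖(N : ℂ)‖ = (N : ℝ) := by
      rw [Complex.norm_natCast]
    rw [h2]
    rw [div_le_iff₀ hNR]
    calc ‖G - (M₁ : ℂ)‖ * ‖A‖
        ≤ ((M₁ : ℝ) * (Real.sqrt 2 * SB)) * (Q K : ℝ) := h1
      _ = (Real.sqrt 2 * SB) * ((M₁ : ℝ) * (Q K : ℝ)) := by ring
      _ ≤ (Real.sqrt 2 * SB) * (N : ℝ) := by
          refine mul_le_mul_of_nonneg_left ?_ (by positivity)
          exact_mod_cast hM1le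
      _ = Real.sqrt 2 * SB * (N : ℝ) := by ring
  have hT2 : ‖(-(R : ℂ)) * A / ((N : ℂ) * ((Q K : ℕ) : ℂ))‖ ≤ (Q K : ℝ) / (N : ℝ) := by
    rw [norm_div, norm_mul, norm_mul, norm_neg]
    have hRabs : ‖(R : ℂ)‖ = (R : ℝ) := Complex.norm_natCast R
    have hNabs : ‖(N : ℂ)‖ = (N : ℝ) := Complex.norm_natCast N
    have hQabs : ‖((Q K : ℕ) : ℂ)‖ = (Q K : ℝ) := Complex.norm_natCast _
    rw [hRabs, hNabs, hQabs, div_le_div_iff₀ (by positivity) hNR]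
    have hRle : (R : ℝ) ≤ (Q K : ℝ) := by exact_mod_cast le_of_lt hRlt
    have h1 : (R : ℝ) * ‖A‖ ≤ (Q K : ℝ) * (Q K : ℝ) :=
      mul_le_mul hRle hAabs habsA hqKR.le
    nlinarith [hNR.le]
  have hT3 : ‖((P : ℂ) - H) * A / (((Q (L + 1) : ℕ)) : ℂ)‖ ≤ Real.sqrt 2 * SB := by
    have hHbound : ‖(P : ℂ) - H‖ ≤ (P : ℝ) * (Real.sqrt 2 * SB) := by
      have hHsub : (P : ℂ) - H = ∑ m ∈ Finset.range P, (1 - e (m * Q K)) := by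
        rw [Finset.sum_sub_distrib, Finset.sum_const, Finset.card_range, hH]
        simp
      rw [hHsub]
      calc ‖∑ m ∈ Finset.range P, (1 - e (m * Q K))‖
          ≤ ∑ m ∈ Finset.range P, ‖1 - e (m * Q K)‖ := norm_sum_le _ _
        _ ≤ ∑ m ∈ Finset.range P, Real.sqrt 2 * SB := by
            refine Finset.sum_le_sum fun m hm => ?_
            rw [← norm_neg, neg_sub]
            refine key m ?_
            have hmP : m < P := Finset.mem_range.mp hm
            calc m * Q K < P * Q K := mul_lt_mul_of_pos_right hmP hqKpos
              _ = Q (L + 1) := by rw [hQL1]; ring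
        _ = (P : ℝ) * (Real.sqrt 2 * SB) := by
            rw [Finset.sum_const, Finset.card_range, nsmul_eq_mul]
    rw [norm_div, norm_mul, Complex.norm_natCast]
    rw [div_le_iff₀ hQL1R]
    calc ‖(P : ℂ) - H‖ * ‖A‖
        ≤ ((P : ℝ) * (Real.sqrt 2 * SB)) * (Q K : ℝ) :=
          mul_le_mul hHbound hAabs habsA (by positivity)
      _ = (Real.sqrt 2 * SB) * ((Q K : ℝ) * (P : ℝ)) := by ring
      _ = Real.sqrt 2 * SB * ((Q (L + 1) : ℕ) : ℝ) := by
          congr 1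
          rw [hQL1]
          push_cast
          ring
  have hT4 : ‖Tail / (N : ℂ)‖ ≤ (Q K : ℝ) / (N : ℝ) := by
    rw [norm_div, Complex.norm_natCast]
    have : ‖Tail‖ ≤ (R : ℝ) := by
      calc ‖Tail‖ ≤ ∑ n ∈ Finset.Ico (M₁ * Q K) N, ‖e n‖ :=
            norm_sum_le _ _
        _ = (R : ℝ) := by
            simp only [habs, Finset.sum_const, Nat.card_Ico, nsmul_eq_mul, mul_one]
            congr 1
            omega
    calc ‖Tail‖ / (N : ℝ) ≤ (R : ℝ) / (N : ℝ) := by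
          exact (div_le_div_iff_of_pos_right hNR).mpr this
      _ ≤ (Q K : ℝ) / (N : ℝ) := by
          refine (div_le_div_iff_of_pos_right hNR).mpr ?_
          exact_mod_cast le_of_lt hRlt
  -- assemble
  have hmain : ‖empCharFun f N t - empCharFun f (Q (L + 1)) t‖
      ≤ 2 * ((Q K : ℝ) / (N : ℝ)) + 2 * (Real.sqrt 2 * SB) := by
    rw [hphiN, hphiQ, hident]
    calc ‖(G - (M₁ : ℂ)) * A / (N : ℂ)
            + (-(R : ℂ)) * A / ((N : ℂ) * ((Q K : ℕ) : ℂ))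
            + ((P : ℂ) - H) * A / (((Q (L + 1) : ℕ)) : ℂ)
            + Tail / (N : ℂ)‖
        ≤ ‖(G - (M₁ : ℂ)) * A / (N : ℂ)‖
            + ‖(-(R : ℂ)) * A / ((N : ℂ) * ((Q K : ℕ) : ℂ))‖
            + ‖((P : ℂ) - H) * A / (((Q (L + 1) : ℕ)) : ℂ)‖
            + ‖Tail / (N : ℂ)‖ := by
          refine le_trans (norm_add_le _ _) ?_
          refine add_le_add ?_ le_rfl
          refine le_trans (norm_add_le _ _) ?_
          refine add_le_add ?_ le_rfl
          exact norm_add_le _ _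
      _ ≤ Real.sqrt 2 * SB + (Q K : ℝ) / (N : ℝ) + Real.sqrt 2 * SB + (Q K : ℝ) / (N : ℝ) := by
          gcongr
      _ = 2 * ((Q K : ℝ) / (N : ℝ)) + 2 * (Real.sqrt 2 * SB) := by ring
  refine hmain.trans ?_
  have hPLcast : (∏ j ∈ Finset.Ico K L, (a j : ℝ)) = (PL : ℝ) := by
    rw [hPLdef]
    push_cast
    ring
  have hfinal1 : 2 * ((Q K : ℝ) / (N : ℝ)) ≤ 2 / (PL : ℝ) := by
    have hPLR : (0 : ℝ) < (PL : ℝ) := by exact_mod_cast hPLpos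
    have hkey : (Q K : ℝ) * (PL : ℝ) ≤ (N : ℝ) := by
      have h2 : ((Q K * PL : ℕ) : ℝ) ≤ (N : ℝ) := by
        exact_mod_cast (hQL ▸ hL1)
      push_cast at h2
      linarith
    rw [← mul_div_assoc, div_le_div_iff₀ hNR hPLR]
    nlinarith
  have hgoalSB : (∑ j ∈ Finset.Icc K L,
      (Finset.Ico 1 (a j)).sup'
        (Finset.nonempty_Ico.mpr (by have := ha j; omega))
        (fun d => Real.sqrt (1 - Real.cos (t * f (d * Q j))))) = SB := by
    simp only [hSB, hB]
  rw [hPLcast]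
  linarith
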